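/- When all vehicles have predefined routes (ξ₁ + ξ₂ = 1, so αᵢ = ξᵢ), the partial evacuation fluxes qᵢ = min{Sᵢ, ((1−ξ_j)/ξ_j) S_j, max{D₀ − S_j, ξᵢ D₀}} equal the FIFO fluxes ξᵢ · min{D₀, S₁/ξ₁, S₂/ξ₂}. -/

import Mathlib

lemma aux_fifo
    (D₀ S₁ S₂ ξ₁ ξ₂ : ℝ)
    (hD₀ : 0 ≤ D₀) (hS₂ : 0 ≤ S₂)
    (hξ₁ : 0 < ξ₁) (hξ₂ : 0 < ξ₂) (hξ : ξ₁ + ξ₂ = 1) :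
    min S₁ (min (ξ₁ / ξ₂ * S₂) (max (D₀ - S₂) (ξ₁ * D₀)))
      = ξ₁ * min D₀ (min (S₁ / ξ₁) (S₂ / ξ₂)) := by
  have hR : ξ₁ * min D₀ (min (S₁ / ξ₁) (S₂ / ξ₂))
      = min (ξ₁ * D₀) (min S₁ (ξ₁ / ξ₂ * S₂)) := by
    rw [mul_min_of_nonneg _ _ hξ₁.le, mul_min_of_nonneg _ _ hξ₁.le,
      mul_div_cancel₀ _ hξ₁.ne']
    ring_nf
  rw [hR]
  rcases le_total (ξ₂ * D₀) S₂ with h | h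
  · have hmax : max (D₀ - S₂) (ξ₁ * D₀) = ξ₁ * D₀ := by
      apply max_eq_right; nlinarith
    rw [hmax, min_comm (ξ₁ * D₀), min_assoc]
  · have h1 : ξ₁ / ξ₂ * S₂ ≤ ξ₁ * D₀ := by
      rw [div_mul_eq_mul_div, div_le_iff₀ hξ₂]; nlinarith
    have h2 : ξ₁ / ξ₂ * S₂ ≤ max (D₀ - S₂) (ξ₁ * D₀) :=
      h1.trans (le_max_right _ _)
    rw [min_eq_left h2, min_comm (ξ₁ * D₀), min_assoc, min_eq_left h1]

theorem partial_evacuation_reduces_to_fifo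
    (D₀ S₁ S₂ ξ₁ ξ₂ : ℝ)
    (hD₀ : 0 ≤ D₀) (hS₁ : 0 ≤ S₁) (hS₂ : 0 ≤ S₂)
    (hξ₁ : 0 < ξ₁) (hξ₂ : 0 < ξ₂) (hξ : ξ₁ + ξ₂ = 1) :
    min S₁ (min (ξ₁ / ξ₂ * S₂) (max (D₀ - S₂) (ξ₁ * D₀)))
      = ξ₁ * min D₀ (min (S₁ / ξ₁) (S₂ / ξ₂)) ∧
    min S₂ (min (ξ₂ / ξ₁ * S₁) (max (D₀ - S₁) (ξ₂ * D₀)))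
      = ξ₂ * min D₀ (min (S₁ / ξ₁) (S₂ / ξ₂)) := by
  constructor
  · exact aux_fifo D₀ S₁ S₂ ξ₁ ξ₂ hD₀ hS₂ hξ₁ hξ₂ hξ
  · rw [min_comm (S₁ / ξ₁)]
    exact aux_fifo D₀ S₂ S₁ ξ₂ ξ₁ hD₀ hS₁ hξ₂ hξ₁ (by linarith)
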